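/- Let $(x_k^*)$ be a sequence in $B_{X^*}$ and $(\lambda^n)$ finitely supported convex coefficient sequences with $\lambda_k^n \to \lambda_k$ pointwise, such that each sequence $(\lambda_k^n)_n$ is eventually monotone. With $N_n = \{k : \lambda_k^n > \lambda_k\}$, the sequence $y_n^- := \sum_{k \notin N_n} \lambda_k^n x_k^*$ is norm-Cauchy in $X^*$, hence norm-convergent. -/

import Mathlib

open Filter Topology

/-- With eventually monotone coefficient sequences, the sequence
`yₙ⁻ = ∑_{k ∉ Nₙ} λₖⁿ xₖ*` is norm-Cauchy, hence norm-convergent. -/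
theorem yMinus_normCauchy
    (X : Type*) [NormedAddCommGroup X] [NormedSpace ℝ X] [CompleteSpace X]
    (x : ℕ → StrongDual ℝ X) (hx : ∀ k, ‖x k‖ ≤ 1)
    (l : ℕ → ℕ → ℝ)
    (hrange : ∀ n k, l n k ∈ Set.Icc (0 : ℝ) 1)
    (hfin : ∀ n, (Function.support (l n)).Finite)
    (hsum : ∀ n, ∑' k, l n k = 1)
    (lim : ℕ → ℝ)
    (hlim : ∀ k, Tendsto (fun n => l n k) atTop (𝓝 (lim k)))
    (hSlim : Summable lim)
    (hmono : ∀ k, ∃ N, (∀ m n', N ≤ m → m ≤ n' → l m k ≤ l n' k) ∨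
      (∀ m n', N ≤ m → m ≤ n' → l n' k ≤ l m k)) :
    CauchySeq (fun n => ∑' k, (if l n k ≤ lim k then l n k else 0) • x k) ∧
      ∃ z : StrongDual ℝ X,
        Tendsto (fun n => ∑' k, (if l n k ≤ lim k then l n k else 0) • x k)
          atTop (𝓝 z) := by
  have hlim0 : ∀ k, 0 ≤ lim k := fun k =>
    ge_of_tendsto' (hlim k) (fun n => (hrange n k).1)
  have hμbd : ∀ n k, 0 ≤ (if l n k ≤ lim k then l n k else 0) ∧
      (if l n k ≤ lim k then l n k else 0) ≤ lim k := by
    intro n k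
    split
    · exact ⟨(hrange n k).1, ‹_›⟩
    · exact ⟨le_refl 0, hlim0 k⟩
  have hconv : ∀ k, ∃ c, Tendsto (fun n => if l n k ≤ lim k then l n k else 0)
      atTop (𝓝 c) := by
    intro k
    obtain ⟨N, hN | hN⟩ := hmono k
    · refine ⟨lim k, ?_⟩
      have hle : ∀ n, N ≤ n → l n k ≤ lim k := by
        intro n hn
        refine ge_of_tendsto (hlim k) ?_
        filter_upwards [eventually_ge_atTop n] with m hm
        exact hN n m hn hm
      refine Tendsto.congr' ?_ (hlim k)
      filter_upwards [eventually_ge_atTop N] with n hn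
      simp [hle n hn]
    · have hge : ∀ n, N ≤ n → lim k ≤ l n k := by
        intro n hn
        refine le_of_tendsto (hlim k) ?_
        filter_upwards [eventually_ge_atTop n] with m hm
        exact hN n m hn hm
      by_cases h : ∃ n, N ≤ n ∧ l n k = lim k
      · obtain ⟨n0, hn0, he⟩ := h
        refine ⟨lim k, tendsto_const_nhds.congr' ?_⟩
        filter_upwards [eventually_ge_atTop n0] with m hm
        have h1 : l m k ≤ lim k := he ▸ hN n0 m hn0 hm
        have h2 : lim k ≤ l m k := hge m (hn0.trans hm)
        simp [h1, le_antisymm h1 h2]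
      · push_neg at h
        refine ⟨0, tendsto_const_nhds.congr' ?_⟩
        filter_upwards [eventually_ge_atTop N] with n hn
        have : lim k < l n k := lt_of_le_of_ne (hge n hn) (fun e => h n hn e.symm)
        simp [not_le.mpr this]
  choose g hg using hconv
  have key : Tendsto (fun n => ∑' k, (if l n k ≤ lim k then l n k else 0) • x k)
      atTop (𝓝 (∑' k, g k • x k)) := by
    refine tendsto_tsum_of_dominated_convergence hSlim
      (fun k => (hg k).smul tendsto_const_nhds) ?_
    filter_upwards with n
    intro k
    have h1 := (hμbd n k).1
    have h2 := (hμbd n k).2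
    calc ‖(if l n k ≤ lim k then l n k else 0) • x k‖
        = |(if l n k ≤ lim k then l n k else 0)| * ‖x k‖ := by
          rw [norm_smul, Real.norm_eq_abs]
      _ ≤ lim k * 1 := by
          apply mul_le_mul _ (hx k) (norm_nonneg _) (hlim0 k)
          rwa [abs_of_nonneg h1]
      _ = lim k := mul_one _
  exact ⟨key.cauchySeq, _, key⟩
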